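/- arXiv:2309.04035 — 3 statements merged into one kernel-verified Lean document; each statement's English description precedes it below -/
import Mathlib

section
/- Let f : ℝ² → ℝ be twice continuously differentiable on a neighborhood of a point p ∈ ℝ², let w : ℝ² → ℝ³ with components (w₁, w₂, w₃) be differentiable at p, and suppose f_x(p) = f_y(p) = 0 and w₃(p) = 0. Then the local-coordinate surface divergence expression g^{11} ∂_x̂((∂_x̂ f̂)·w) + g^{12} ∂_ŷ((∂_x̂ f̂)·w) + g^{21} ∂_x̂((∂_ŷ f̂)·w) + g^{22} ∂_ŷ((∂_ŷ f̂)·w), with all quantities evaluated at p, equals ∂_x̂ w₁(p) + ∂_ŷ w₂(p). That is, at a point where the tangent plane is horizontal and the vector field is tangential, the local-coordinate formulation of the surface divergence reduces to the tangent plane formulation. -/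
/-- Partial derivative with respect to the first coordinate. -/
noncomputable def pdx (g : ℝ × ℝ → ℝ) (z : ℝ × ℝ) : ℝ := fderiv ℝ g z (1, 0)

/-- Partial derivative with respect to the second coordinate. -/
noncomputable def pdy (g : ℝ × ℝ → ℝ) (z : ℝ × ℝ) : ℝ := fderiv ℝ g z (0, 1)

lemma fderiv_add_mul_eq (u g w3 : ℝ × ℝ → ℝ) (p : ℝ × ℝ)
    (hu : DifferentiableAt ℝ u p) (hg : DifferentiableAt ℝ g p)
    (hw3 : DifferentiableAt ℝ w3 p) (hgp : g p = 0) (hw3p : w3 p = 0) :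
    fderiv ℝ (fun z => u z + g z * w3 z) p = fderiv ℝ u p := by
  rw [fderiv_fun_add hu (hg.fun_mul hw3), fderiv_fun_mul hg hw3, hgp, hw3p]
  simp

theorem surface_divergence_tangent_plane (f w1 w2 w3 : ℝ × ℝ → ℝ) (p : ℝ × ℝ)
    (hf : ContDiffAt ℝ 2 f p)
    (hw1 : DifferentiableAt ℝ w1 p) (hw2 : DifferentiableAt ℝ w2 p)
    (hw3 : DifferentiableAt ℝ w3 p)
    (hfx : pdx f p = 0) (hfy : pdy f p = 0) (hw3p : w3 p = 0)
    (G : Matrix (Fin 2) (Fin 2) ℝ)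
    (hG : G = !![1 + pdx f p ^ 2, pdx f p * pdy f p;
                 pdx f p * pdy f p, 1 + pdy f p ^ 2]) :
    G⁻¹ 0 0 * pdx (fun z => w1 z + pdx f z * w3 z) p
      + G⁻¹ 0 1 * pdy (fun z => w1 z + pdx f z * w3 z) p
      + G⁻¹ 1 0 * pdx (fun z => w2 z + pdy f z * w3 z) p
      + G⁻¹ 1 1 * pdy (fun z => w2 z + pdy f z * w3 z) p
      = pdx w1 p + pdy w2 p := by
  have hG1 : G = 1 := by
    rw [hG, hfx, hfy, Matrix.one_fin_two]; norm_num
  have hGinv : G⁻¹ = 1 := by rw [hG1, inv_one]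
  have hfd : DifferentiableAt ℝ (fderiv ℝ f) p :=
    (hf.fderiv_right (m := 1) le_rfl).differentiableAt one_ne_zero
  have hpdx : DifferentiableAt ℝ (pdx f) p := hfd.clm_apply (differentiableAt_const _)
  have hpdy : DifferentiableAt ℝ (pdy f) p := hfd.clm_apply (differentiableAt_const _)
  have h1 := fderiv_add_mul_eq w1 (pdx f) w3 p hw1 hpdx hw3 hfx hw3p
  have h2 := fderiv_add_mul_eq w2 (pdy f) w3 p hw2 hpdy hw3 hfy hw3p
  simp only [pdx, pdy] at h1 h2 ⊢
  simp only [h1, h2, hGinv]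
  norm_num [Matrix.one_apply]
end

section
/- Let f : ℝ² → ℝ and u : ℝ² → ℝ be twice continuously differentiable on a neighborhood of a point z ∈ ℝ². Write D = 1 + f_x² + f_y², g^{11} = (1 + f_y²)/D, g^{12} = g^{21} = −f_x f_y / D, g^{22} = (1 + f_x²)/D, and √|g| = √D. Then the divergence form of the Laplace–Beltrami operator, (1/√|g|)[∂_x̂(√|g|(g^{11} u_x + g^{12} u_y)) + ∂_ŷ(√|g|(g^{21} u_x + g^{22} u_y))], evaluated at z, equals D⁻² [ (f_y f_{x̂ŷ}(1 + 2f_x² + f_y²) − (f_x f_{x̂x̂} + f_y f_{x̂ŷ})(1 + f_y²) − f_x f_{ŷŷ}(1 + f_x²)) u_x + (f_x f_{x̂ŷ}(1 + 2f_y² + f_x²) − (f_y f_{ŷŷ} + f_x f_{x̂ŷ})(1 + f_x²) − f_y f_{x̂x̂}(1 + f_y²)) u_y ] + g^{11} u_{x̂x̂} + 2 g^{12} u_{x̂ŷ} + g^{22} u_{ŷŷ}, with all quantities evaluated at z. -/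
/-- Determinant of the Monge-patch metric tensor: `|g| = 1 + f_x² + f_y²`. -/
noncomputable def Dg (f : ℝ × ℝ → ℝ) (z : ℝ × ℝ) : ℝ := 1 + pdx f z ^ 2 + pdy f z ^ 2

/-- Entry `g¹¹ = (1 + f_y²)/|g|` of the inverse metric tensor. -/
noncomputable def g11 (f : ℝ × ℝ → ℝ) (z : ℝ × ℝ) : ℝ := (1 + pdy f z ^ 2) / Dg f z

/-- Entry `g¹² = g²¹ = -f_x f_y/|g|` of the inverse metric tensor. -/
noncomputable def g12 (f : ℝ × ℝ → ℝ) (z : ℝ × ℝ) : ℝ := -(pdx f z * pdy f z) / Dg f z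

/-- Entry `g²² = (1 + f_x²)/|g|` of the inverse metric tensor. -/
noncomputable def g22 (f : ℝ × ℝ → ℝ) (z : ℝ × ℝ) : ℝ := (1 + pdx f z ^ 2) / Dg f z

set_option maxHeartbeats 4000000 in
theorem laplace_beltrami_expansion (f u : ℝ × ℝ → ℝ) (z : ℝ × ℝ)
    (hf : ContDiffAt ℝ 2 f z) (hu : ContDiffAt ℝ 2 u z) :
    (1 / Real.sqrt (Dg f z)) *
      (pdx (fun w => Real.sqrt (Dg f w) * (g11 f w * pdx u w + g12 f w * pdy u w)) z
        + pdy (fun w => Real.sqrt (Dg f w) * (g12 f w * pdx u w + g22 f w * pdy u w)) z)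
    = (1 / (Dg f z) ^ 2) *
        ((pdy f z * pdy (pdx f) z * (1 + 2 * pdx f z ^ 2 + pdy f z ^ 2)
            - (pdx f z * pdx (pdx f) z + pdy f z * pdy (pdx f) z) * (1 + pdy f z ^ 2)
            - pdx f z * pdy (pdy f) z * (1 + pdx f z ^ 2)) * pdx u z
          + (pdx f z * pdy (pdx f) z * (1 + 2 * pdy f z ^ 2 + pdx f z ^ 2)
            - (pdy f z * pdy (pdy f) z + pdx f z * pdy (pdx f) z) * (1 + pdx f z ^ 2)
            - pdy f z * pdx (pdx f) z * (1 + pdy f z ^ 2)) * pdy u z)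
      + g11 f z * pdx (pdx u) z + 2 * g12 f z * pdy (pdx u) z
      + g22 f z * pdy (pdy u) z := by
  have hf1 : ContDiffAt ℝ 1 (fderiv ℝ f) z := hf.fderiv_right (by norm_num)
  have hu1 : ContDiffAt ℝ 1 (fderiv ℝ u) z := hu.fderiv_right (by norm_num)
  have hfd : HasFDerivAt (fderiv ℝ f) (fderiv ℝ (fderiv ℝ f) z) z :=
    (hf1.differentiableAt (by norm_num)).hasFDerivAt
  have hud : HasFDerivAt (fderiv ℝ u) (fderiv ℝ (fderiv ℝ u) z) z :=
    (hu1.differentiableAt (by norm_num)).hasFDerivAt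
  set A := fderiv ℝ (fderiv ℝ f) z with hA
  set B := fderiv ℝ (fderiv ℝ u) z with hB
  have hPfx : HasFDerivAt (pdx f) (A.flip (1,0)) z := by
    have h := hfd.clm_apply (hasFDerivAt_const ((1:ℝ),(0:ℝ)) z)
    simp only [ContinuousLinearMap.comp_zero, zero_add] at h
    exact h
  have hPfy : HasFDerivAt (pdy f) (A.flip (0,1)) z := by
    have h := hfd.clm_apply (hasFDerivAt_const ((0:ℝ),(1:ℝ)) z)
    simp only [ContinuousLinearMap.comp_zero, zero_add] at h
    exact h
  have hPux : HasFDerivAt (pdx u) (B.flip (1,0)) z := by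
    have h := hud.clm_apply (hasFDerivAt_const ((1:ℝ),(0:ℝ)) z)
    simp only [ContinuousLinearMap.comp_zero, zero_add] at h
    exact h
  have hPuy : HasFDerivAt (pdy u) (B.flip (0,1)) z := by
    have h := hud.clm_apply (hasFDerivAt_const ((0:ℝ),(1:ℝ)) z)
    simp only [ContinuousLinearMap.comp_zero, zero_add] at h
    exact h
  have hsymf : A (1,0) (0,1) = A (0,1) (1,0) := hf.isSymmSndFDerivAt (by norm_num) _ _
  have hsymu : B (1,0) (0,1) = B (0,1) (1,0) := hu.isSymmSndFDerivAt (by norm_num) _ _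
  -- second derivative values
  have e1 : pdx (pdx f) z = A (1,0) (1,0) := by
    show fderiv ℝ (pdx f) z (1,0) = _
    rw [hPfx.fderiv]; rfl
  have e2 : pdy (pdx f) z = A (0,1) (1,0) := by
    show fderiv ℝ (pdx f) z (0,1) = _
    rw [hPfx.fderiv]; rfl
  have e3 : pdx (pdy f) z = A (1,0) (0,1) := by
    show fderiv ℝ (pdy f) z (1,0) = _
    rw [hPfy.fderiv]; rfl
  have e4 : pdy (pdy f) z = A (0,1) (0,1) := by
    show fderiv ℝ (pdy f) z (0,1) = _
    rw [hPfy.fderiv]; rfl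
  have e5 : pdx (pdx u) z = B (1,0) (1,0) := by
    show fderiv ℝ (pdx u) z (1,0) = _
    rw [hPux.fderiv]; rfl
  have e6 : pdy (pdx u) z = B (0,1) (1,0) := by
    show fderiv ℝ (pdx u) z (0,1) = _
    rw [hPux.fderiv]; rfl
  have e7 : pdx (pdy u) z = B (1,0) (0,1) := by
    show fderiv ℝ (pdy u) z (1,0) = _
    rw [hPuy.fderiv]; rfl
  have e8 : pdy (pdy u) z = B (0,1) (0,1) := by
    show fderiv ℝ (pdy u) z (0,1) = _
    rw [hPuy.fderiv]; rfl
  -- positivity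
  have hD : 0 < Dg f z := by unfold Dg; positivity
  have hs : Real.sqrt (Dg f z) ≠ 0 := (Real.sqrt_pos.mpr hD).ne'
  have hsq : Real.sqrt (Dg f z) * Real.sqrt (Dg f z) = Dg f z := Real.mul_self_sqrt hD.le
  -- rewrite the two inner functions
  have hfun1 : (fun w => Real.sqrt (Dg f w) * (g11 f w * pdx u w + g12 f w * pdy u w))
      = (fun w => ((1 + pdy f w * pdy f w) * pdx u w - pdx f w * pdy f w * pdy u w)
          * (Real.sqrt (Dg f w))⁻¹) := by
    funext w
    have hDw : 0 < Dg f w := by unfold Dg; positivity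
    have hsw : Real.sqrt (Dg f w) ≠ 0 := (Real.sqrt_pos.mpr hDw).ne'
    have hsqw : Real.sqrt (Dg f w) * Real.sqrt (Dg f w) = Dg f w := Real.mul_self_sqrt hDw.le
    unfold g11 g12
    set s := Real.sqrt (Dg f w) with hsdef
    rw [← hsqw]
    field_simp
    ring
  have hfun2 : (fun w => Real.sqrt (Dg f w) * (g12 f w * pdx u w + g22 f w * pdy u w))
      = (fun w => ((1 + pdx f w * pdx f w) * pdy u w - pdx f w * pdy f w * pdx u w)
          * (Real.sqrt (Dg f w))⁻¹) := by
    funext w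
    have hDw : 0 < Dg f w := by unfold Dg; positivity
    have hsw : Real.sqrt (Dg f w) ≠ 0 := (Real.sqrt_pos.mpr hDw).ne'
    have hsqw : Real.sqrt (Dg f w) * Real.sqrt (Dg f w) = Dg f w := Real.mul_self_sqrt hDw.le
    unfold g12 g22
    set s := Real.sqrt (Dg f w) with hsdef
    rw [← hsqw]
    field_simp
    ring
  -- derivative of Dg and of (sqrt Dg)⁻¹
  have hDgd : HasFDerivAt (Dg f)
      ((0 : ℝ×ℝ →L[ℝ] ℝ) + (pdx f z • A.flip (1,0) + pdx f z • A.flip (1,0))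
        + (pdy f z • A.flip (0,1) + pdy f z • A.flip (0,1))) z := by
    have h := ((hasFDerivAt_const (1:ℝ) z).add (hPfx.mul hPfx)).add (hPfy.mul hPfy)
    have heq : Dg f = fun w => 1 + pdx f w * pdx f w + pdy f w * pdy f w := by
      funext w; unfold Dg; ring
    rw [heq]; exact h
  have hsqd := hDgd.sqrt hD.ne'
  have hinv0 := (hasDerivAt_inv hs).comp_hasFDerivAt z hsqd
  have hinv : HasFDerivAt (fun w => (Real.sqrt (Dg f w))⁻¹)
      (-(Real.sqrt (Dg f z) ^ 2)⁻¹ •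
        (1 / (2 * Real.sqrt (Dg f z))) •
          ((0 : ℝ×ℝ →L[ℝ] ℝ) + (pdx f z • A.flip (1,0) + pdx f z • A.flip (1,0))
            + (pdy f z • A.flip (0,1) + pdy f z • A.flip (0,1)))) z := hinv0
  -- derivatives of the numerators
  have hN1 := (((hasFDerivAt_const (1:ℝ) z).add (hPfy.mul hPfy)).mul hPux).sub
      ((hPfx.mul hPfy).mul hPuy)
  have hN2 := (((hasFDerivAt_const (1:ℝ) z).add (hPfx.mul hPfx)).mul hPuy).sub
      ((hPfx.mul hPfy).mul hPux)
  have hF1 : HasFDerivAt (fun w => ((1 + pdy f w * pdy f w) * pdx u w - pdx f w * pdy f w * pdy u w)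
      * (Real.sqrt (Dg f w))⁻¹) _ z := hN1.mul hinv
  have hF2 : HasFDerivAt (fun w => ((1 + pdx f w * pdx f w) * pdy u w - pdx f w * pdy f w * pdx u w)
      * (Real.sqrt (Dg f w))⁻¹) _ z := hN2.mul hinv
  have r1 : pdx (fun w => ((1 + pdy f w * pdy f w) * pdx u w - pdx f w * pdy f w * pdy u w)
      * (Real.sqrt (Dg f w))⁻¹) z
      = fderiv ℝ (fun w => ((1 + pdy f w * pdy f w) * pdx u w - pdx f w * pdy f w * pdy u w)
      * (Real.sqrt (Dg f w))⁻¹) z (1,0) := rfl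
  have r2 : pdy (fun w => ((1 + pdx f w * pdx f w) * pdy u w - pdx f w * pdy f w * pdx u w)
      * (Real.sqrt (Dg f w))⁻¹) z
      = fderiv ℝ (fun w => ((1 + pdx f w * pdx f w) * pdy u w - pdx f w * pdy f w * pdx u w)
      * (Real.sqrt (Dg f w))⁻¹) z (0,1) := rfl
  rw [hfun1, hfun2, r1, r2, hF1.fderiv, hF2.fderiv]
  simp only [ContinuousLinearMap.add_apply, ContinuousLinearMap.sub_apply,
    ContinuousLinearMap.smul_apply, ContinuousLinearMap.coe_smul', Pi.smul_apply,
    ContinuousLinearMap.flip_apply, ContinuousLinearMap.zero_apply, smul_eq_mul,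
    ContinuousLinearMap.coe_sub', Pi.sub_apply, ContinuousLinearMap.coe_add', Pi.add_apply, Pi.mul_apply]
  rw [e1, e2, e4, e5, e6, e8, hsymf, hsymu]
  unfold g11 g12 g22
  set s := Real.sqrt (Dg f z) with hsdef
  have hs2 : s * s = 1 + pdx f z ^ 2 + pdy f z ^ 2 := hsq
  rw [← hsq]
  field_simp
  ring_nf
  have h13 : s ^ 13 = s ^ 11 * (1 + pdx f z ^ 2 + pdy f z ^ 2) := by
    rw [← hs2]; ring
  have h2 : s ^ 2 = 1 + pdx f z ^ 2 + pdy f z ^ 2 := by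
    rw [← hs2]; ring
  rw [h2]
  ring
end

section
/- Let f : ℝ² → ℝ and u : ℝ² → ℝ be twice continuously differentiable on a neighborhood of a point p ∈ ℝ², and suppose f_x(p) = f_y(p) = 0. Then the divergence form of the Laplace–Beltrami operator, (1/√|g|)[∂_x̂(√|g|(g^{11} u_x + g^{12} u_y)) + ∂_ŷ(√|g|(g^{21} u_x + g^{22} u_y))], evaluated at p, equals u_{x̂x̂}(p) + u_{ŷŷ}(p). That is, at a point where the tangent plane is horizontal, the local-coordinate formulation of the surface Laplacian reduces to the tangent plane formulation ∂_{x̂x̂} + ∂_{ŷŷ}. -/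
/-- The Monge-patch metric tensor `G(z)`. -/
noncomputable def Gm (f : ℝ × ℝ → ℝ) (z : ℝ × ℝ) : Matrix (Fin 2) (Fin 2) ℝ :=
  !![1 + pdx f z ^ 2, pdx f z * pdy f z; pdx f z * pdy f z, 1 + pdy f z ^ 2]

/-- Square root of the metric determinant `√|g| = √(1 + f_x² + f_y²)`. -/
noncomputable def sqrtg (f : ℝ × ℝ → ℝ) (z : ℝ × ℝ) : ℝ :=
  Real.sqrt (1 + pdx f z ^ 2 + pdy f z ^ 2)

lemma lbHelper (φ ψ ux uy : ℝ × ℝ → ℝ) (p v : ℝ × ℝ)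
    (hφ : DifferentiableAt ℝ φ p) (hψ : DifferentiableAt ℝ ψ p)
    (hux : DifferentiableAt ℝ ux p) (huy : DifferentiableAt ℝ uy p)
    (h0 : φ p = 0) (h1 : ψ p = 0) :
    fderiv ℝ (fun w => ((1 + ψ w ^ 2) * ux w - φ w * ψ w * uy w) *
      (Real.sqrt (1 + φ w ^ 2 + ψ w ^ 2))⁻¹) p v = fderiv ℝ ux p v := by
  simp only [pow_two]
  have hD : (0:ℝ) < 1 + φ p * φ p + ψ p * ψ p := by nlinarith [mul_self_nonneg (φ p), mul_self_nonneg (ψ p)]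
  have hsne : Real.sqrt (1 + φ p * φ p + ψ p * ψ p) ≠ 0 := ne_of_gt (Real.sqrt_pos.2 hD)
  have hg : HasFDerivAt (fun w => 1 + φ w * φ w + ψ w * ψ w)
      (((φ p • fderiv ℝ φ p + φ p • fderiv ℝ φ p) + (ψ p • fderiv ℝ ψ p + ψ p • fderiv ℝ ψ p))) p :=
    ((hφ.hasFDerivAt.mul hφ.hasFDerivAt).const_add 1).add (hψ.hasFDerivAt.mul hψ.hasFDerivAt)
  have hsq := hg.sqrt hD.ne'
  have hinv := (hasDerivAt_inv hsne).comp_hasFDerivAt p hsq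
  have hN : HasFDerivAt (fun w => (1 + ψ w * ψ w) * ux w - φ w * ψ w * uy w)
      (((1 + ψ p * ψ p) • fderiv ℝ ux p + ux p • (ψ p • fderiv ℝ ψ p + ψ p • fderiv ℝ ψ p)) -
        ((φ p * ψ p) • fderiv ℝ uy p + uy p • (φ p • fderiv ℝ ψ p + ψ p • fderiv ℝ φ p))) p :=
    (((hψ.hasFDerivAt.mul hψ.hasFDerivAt).const_add 1).mul hux.hasFDerivAt).sub
      ((hφ.hasFDerivAt.mul hψ.hasFDerivAt).mul huy.hasFDerivAt)
  have hF := hN.mul hinv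
  simp only [Function.comp_def, Pi.mul_def] at hF
  rw [hF.fderiv]
  simp [h0, h1, Real.sqrt_one]

lemma pdx_diff (f : ℝ × ℝ → ℝ) (p : ℝ × ℝ) (hf : ContDiffAt ℝ 2 f p) :
    DifferentiableAt ℝ (pdx f) p := by
  have h : ContDiffAt ℝ 1 (fderiv ℝ f) p := hf.fderiv_right (by norm_num)
  exact (h.differentiableAt one_ne_zero).clm_apply (differentiableAt_const _)

lemma pdy_diff (f : ℝ × ℝ → ℝ) (p : ℝ × ℝ) (hf : ContDiffAt ℝ 2 f p) :
    DifferentiableAt ℝ (pdy f) p := by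
  have h : ContDiffAt ℝ 1 (fderiv ℝ f) p := hf.fderiv_right (by norm_num)
  exact (h.differentiableAt one_ne_zero).clm_apply (differentiableAt_const _)

lemma Gm_inv (f : ℝ × ℝ → ℝ) (w : ℝ × ℝ) :
    (Gm f w)⁻¹ = (1 + pdx f w ^ 2 + pdy f w ^ 2)⁻¹ •
      !![1 + pdy f w ^ 2, -(pdx f w * pdy f w); -(pdx f w * pdy f w), 1 + pdx f w ^ 2] := by
  rw [Gm, Matrix.inv_def, Matrix.adjugate_fin_two_of, Matrix.det_fin_two_of, Ring.inverse_eq_inv']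
  congr 1
  ring

theorem laplace_beltrami_tangent_plane (f u : ℝ × ℝ → ℝ) (p : ℝ × ℝ)
    (hf : ContDiffAt ℝ 2 f p) (hu : ContDiffAt ℝ 2 u p)
    (hfx : pdx f p = 0) (hfy : pdy f p = 0) :
    (1 / sqrtg f p) *
      (pdx (fun w => sqrtg f w *
          ((Gm f w)⁻¹ 0 0 * pdx u w + (Gm f w)⁻¹ 0 1 * pdy u w)) p
        + pdy (fun w => sqrtg f w *
          ((Gm f w)⁻¹ 1 0 * pdx u w + (Gm f w)⁻¹ 1 1 * pdy u w)) p)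
    = pdx (pdx u) p + pdy (pdy u) p := by
  have hsg : sqrtg f p = 1 := by simp [sqrtg, hfx, hfy]
  have key : ∀ w, Real.sqrt (1 + pdx f w ^ 2 + pdy f w ^ 2) *
      (1 + pdx f w ^ 2 + pdy f w ^ 2)⁻¹ =
      (Real.sqrt (1 + pdx f w ^ 2 + pdy f w ^ 2))⁻¹ := by
    intro w
    have hD : (0:ℝ) < 1 + pdx f w ^ 2 + pdy f w ^ 2 := by positivity
    rw [← Real.mul_self_sqrt hD.le, mul_inv]
    field_simp
    rw [Real.sqrt_sq (Real.sqrt_nonneg _)]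
  have hfun1 : (fun w => sqrtg f w *
      ((Gm f w)⁻¹ 0 0 * pdx u w + (Gm f w)⁻¹ 0 1 * pdy u w)) =
      fun w => ((1 + pdy f w ^ 2) * pdx u w - pdx f w * pdy f w * pdy u w) *
        (Real.sqrt (1 + pdx f w ^ 2 + pdy f w ^ 2))⁻¹ := by
    funext w
    rw [Gm_inv]
    have hk := key w
    simp [Matrix.smul_apply, smul_eq_mul, sqrtg]
    linear_combination ((1 + pdy f w ^ 2) * pdx u w - pdx f w * pdy f w * pdy u w) * hk
  have hfun2 : (fun w => sqrtg f w *
      ((Gm f w)⁻¹ 1 0 * pdx u w + (Gm f w)⁻¹ 1 1 * pdy u w)) =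
      fun w => ((1 + pdx f w ^ 2) * pdy u w - pdy f w * pdx f w * pdx u w) *
        (Real.sqrt (1 + pdy f w ^ 2 + pdx f w ^ 2))⁻¹ := by
    funext w
    rw [Gm_inv]
    have hk := key w
    simp [Matrix.smul_apply, smul_eq_mul, sqrtg]
    have harg : (1:ℝ) + pdy f w ^ 2 + pdx f w ^ 2 = 1 + pdx f w ^ 2 + pdy f w ^ 2 := by ring
    rw [harg]
    linear_combination ((1 + pdx f w ^ 2) * pdy u w - pdy f w * pdx f w * pdx u w) * hk
  rw [hfun1, hfun2, hsg]
  have hdfx := pdx_diff f p hf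
  have hdfy := pdy_diff f p hf
  have hudx := pdx_diff u p hu
  have hudy := pdy_diff u p hu
  have e1 : pdx (fun w => ((1 + pdy f w ^ 2) * pdx u w - pdx f w * pdy f w * pdy u w) *
      (Real.sqrt (1 + pdx f w ^ 2 + pdy f w ^ 2))⁻¹) p = pdx (pdx u) p :=
    lbHelper (pdx f) (pdy f) (pdx u) (pdy u) p (1, 0) hdfx hdfy hudx hudy hfx hfy
  have e2 : pdy (fun w => ((1 + pdx f w ^ 2) * pdy u w - pdy f w * pdx f w * pdx u w) *
      (Real.sqrt (1 + pdy f w ^ 2 + pdx f w ^ 2))⁻¹) p = pdy (pdy u) p :=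
    lbHelper (pdy f) (pdx f) (pdy u) (pdx u) p (0, 1) hdfy hdfx hudy hudx hfy hfx
  rw [e1, e2]
  norm_num
end
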